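/- The topological frontier (boundary) of the nonagon P equals the union of the nine closed segments between cyclically consecutive vertices, that is, frontier P = [v0,v1] ∪ [v1,v2] ∪ [v2,v3] ∪ [v3,v4] ∪ [v4,v5] ∪ [v5,v6] ∪ [v6,v7] ∪ [v7,v8] ∪ [v8,v0]. In particular, P is a simple polygon with these nine vertices. -/

import Mathlib

open Set

/-- The vertices of the nonagon, in cyclic order. -/
noncomputable def v : Fin 9 → ℝ × ℝ :=
  ![(0, 0), (1, 5), (0, 8), (2, 4), (6, 11), (4, 7), (15, -1), (9, 3), (6, 4)]

/-- The nonagon, realized as the union of the seven triangles of a triangulation. -/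
noncomputable def P : Set (ℝ × ℝ) :=
  convexHull ℝ {v 3, v 4, v 5} ∪ convexHull ℝ {v 3, v 5, v 8} ∪
  convexHull ℝ {v 5, v 6, v 7} ∪ convexHull ℝ {v 5, v 7, v 8} ∪
  convexHull ℝ {v 3, v 8, v 0} ∪ convexHull ℝ {v 3, v 0, v 1} ∪
  convexHull ℝ {v 3, v 1, v 2}

def A0 : ℝ × ℝ := (0, 0)

def A1 : ℝ × ℝ := (1, 5)

def A2 : ℝ × ℝ := (0, 8)

def A3 : ℝ × ℝ := (2, 4)

def A4 : ℝ × ℝ := (6, 11)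

def A5 : ℝ × ℝ := (4, 7)

def A6 : ℝ × ℝ := (15, -1)

def A7 : ℝ × ℝ := (9, 3)

def A8 : ℝ × ℝ := (6, 4)


/-- edge functional -/
def ee (a b p : ℝ × ℝ) : ℝ := (b.1-a.1)*(p.2-a.2)-(b.2-a.2)*(p.1-a.1)

/-- linear part of `ee a b` in direction `d` -/
def el (a b d : ℝ × ℝ) : ℝ := (b.1-a.1)*d.2-(b.2-a.2)*d.1

lemma ee_cont (a b : ℝ × ℝ) : Continuous (ee a b) := by
  unfold ee; fun_prop

lemma ee_combo (a b p q : ℝ × ℝ) (u s : ℝ) (h : u + s = 1) :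
    ee a b (u • p + s • q) = u * ee a b p + s * ee a b q := by
  have hu : u = 1 - s := by linarith
  subst hu
  simp only [ee, Prod.fst_add, Prod.snd_add, Prod.smul_fst, Prod.smul_snd, smul_eq_mul]
  ring

lemma ee_add_smul (a b x d : ℝ × ℝ) (t : ℝ) :
    ee a b (x + t • d) = ee a b x + t * el a b d := by
  simp only [ee, el, Prod.fst_add, Prod.snd_add, Prod.smul_fst, Prod.smul_snd, smul_eq_mul]
  ring

lemma tri_subset (a b c : ℝ × ℝ) (h : 0 < ee a b c) :
    convexHull ℝ {a, b, c} ⊆ {p | 0 ≤ ee a b p ∧ 0 ≤ ee b c p ∧ 0 ≤ ee c a p} := by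
  apply convexHull_min
  · have i1 : ee a b a = 0 := by unfold ee; ring
    have i2 : ee b c a = ee a b c := by unfold ee; ring
    have i3 : ee c a a = 0 := by unfold ee; ring
    have i4 : ee a b b = 0 := by unfold ee; ring
    have i5 : ee b c b = 0 := by unfold ee; ring
    have i6 : ee c a b = ee a b c := by unfold ee; ring
    have i7 : ee a b c = ee a b c := rfl
    have i8 : ee b c c = 0 := by unfold ee; ring
    have i9 : ee c a c = 0 := by unfold ee; ring
    intro p hp
    rcases hp with rfl | rfl | rfl
    · exact ⟨i1.ge, i2 ▸ h.le, i3.ge⟩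
    · exact ⟨i4.ge, i5.ge, i6 ▸ h.le⟩
    · exact ⟨h.le, i8.ge, i9.ge⟩
  · intro x hx y hy u t hu ht hut
    refine ⟨?_, ?_, ?_⟩ <;> rw [ee_combo _ _ _ _ _ _ hut]
    · exact add_nonneg (mul_nonneg hu hx.1) (mul_nonneg ht hy.1)
    · exact add_nonneg (mul_nonneg hu hx.2.1) (mul_nonneg ht hy.2.1)
    · exact add_nonneg (mul_nonneg hu hx.2.2) (mul_nonneg ht hy.2.2)

lemma tri_mem (a b c p : ℝ × ℝ) (h : 0 < ee a b c)
    (h1 : 0 ≤ ee a b p) (h2 : 0 ≤ ee b c p) (h3 : 0 ≤ ee c a p) :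
    p ∈ convexHull ℝ ({a, b, c} : Set (ℝ × ℝ)) := by
  have hc := convex_convexHull ℝ ({a, b, c} : Set (ℝ × ℝ))
  have hsum : ee b c p + ee c a p + ee a b p = ee a b c := by unfold ee; ring
  have bx : (ee b c p) * a.1 + (ee c a p) * b.1 + (ee a b p) * c.1 = (ee a b c) * p.1 := by
    unfold ee; ring
  have by' : (ee b c p) * a.2 + (ee c a p) * b.2 + (ee a b p) * c.2 = (ee a b c) * p.2 := by
    unfold ee; ring
  have hD := h.ne'
  have key := hc.sum_mem (t := (Finset.univ : Finset (Fin 3)))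
      (w := ![ee b c p / ee a b c, ee c a p / ee a b c, ee a b p / ee a b c])
      (z := ![a, b, c]) ?_ ?_ ?_
  · have : (∑ i : Fin 3, (![ee b c p / ee a b c, ee c a p / ee a b c, ee a b p / ee a b c]) i •
        (![a, b, c] : Fin 3 → ℝ × ℝ) i) = p := by
      simp only [Fin.sum_univ_three, Matrix.cons_val_zero, Matrix.cons_val_one,
        Matrix.head_cons, Matrix.cons_val_two, Matrix.tail_cons]
      apply Prod.ext
      · simp only [Prod.fst_add, Prod.smul_fst, smul_eq_mul]
        field_simp
        linear_combination bx
      · simp only [Prod.snd_add, Prod.smul_snd, smul_eq_mul]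
        field_simp
        linear_combination by'
    rwa [this] at key
  · intro i _
    fin_cases i
    · exact div_nonneg h2 h.le
    · exact div_nonneg h3 h.le
    · exact div_nonneg h1 h.le
  · rw [Fin.sum_univ_three]
    simp only [Matrix.cons_val_zero, Matrix.cons_val_one, Matrix.head_cons,
      Matrix.cons_val_two, Matrix.tail_cons]
    field_simp
    linarith [hsum]
  · intro i _
    fin_cases i <;> apply subset_convexHull <;> simp

lemma edge_mem (a b c p : ℝ × ℝ) (h : 0 < ee a b c)
    (h1 : ee a b p = 0) (h2 : 0 ≤ ee b c p) (h3 : 0 ≤ ee c a p) :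
    p ∈ segment ℝ a b := by
  have hsum : ee b c p + ee c a p + ee a b p = ee a b c := by unfold ee; ring
  have bx : (ee b c p) * a.1 + (ee c a p) * b.1 + (ee a b p) * c.1 = (ee a b c) * p.1 := by
    unfold ee; ring
  have by' : (ee b c p) * a.2 + (ee c a p) * b.2 + (ee a b p) * c.2 = (ee a b c) * p.2 := by
    unfold ee; ring
  have hD := h.ne'
  refine ⟨ee b c p / ee a b c, ee c a p / ee a b c, by positivity, by positivity, ?_, ?_⟩
  · field_simp; linarith
  · apply Prod.ext
    · simp only [Prod.fst_add, Prod.smul_fst, smul_eq_mul]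
      field_simp
      linear_combination bx - c.1 * h1
    · simp only [Prod.snd_add, Prod.smul_snd, smul_eq_mul]
      field_simp
      linear_combination by' - c.2 * h1


lemma strict_mem_int {Q : Set (ℝ × ℝ)} (a b c : ℝ × ℝ)
    (hsub : convexHull ℝ {a, b, c} ⊆ Q) (h : 0 < ee a b c) {x : ℝ × ℝ}
    (h1 : 0 < ee a b x) (h2 : 0 < ee b c x) (h3 : 0 < ee c a x) : x ∈ interior Q := by
  rw [mem_interior]
  refine ⟨{p | 0 < ee a b p ∧ 0 < ee b c p ∧ 0 < ee c a p},
    fun p hp => hsub (tri_mem a b c p h hp.1.le hp.2.1.le hp.2.2.le), ?_, ⟨h1, h2, h3⟩⟩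
  exact (isOpen_lt continuous_const (ee_cont a b)).inter
    ((isOpen_lt continuous_const (ee_cont b c)).inter
      (isOpen_lt continuous_const (ee_cont c a)))

lemma diag_int {Q : Set (ℝ × ℝ)} (a b c c' : ℝ × ℝ)
    (h1 : 0 < ee a b c) (h2 : 0 < ee b a c')
    (hQ1 : convexHull ℝ {a, b, c} ⊆ Q) (hQ2 : convexHull ℝ {b, a, c'} ⊆ Q) :
    openSegment ℝ a b ⊆ interior Q := by
  rintro x ⟨u, s, hu, hs, hus, rfl⟩
  rw [mem_interior]
  refine ⟨{p | 0 < ee b c p ∧ 0 < ee c a p ∧ 0 < ee a c' p ∧ 0 < ee c' b p}, ?_, ?_, ?_⟩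
  · intro p hp
    rcases le_or_gt 0 (ee a b p) with hab | hab
    · exact hQ1 (tri_mem a b c p h1 hab hp.1.le hp.2.1.le)
    · refine hQ2 (tri_mem b a c' p h2 ?_ hp.2.2.1.le hp.2.2.2.le)
      have : ee b a p = -ee a b p := by unfold ee; ring
      rw [this]; linarith
  · exact (isOpen_lt continuous_const (ee_cont b c)).inter
      ((isOpen_lt continuous_const (ee_cont c a)).inter
        ((isOpen_lt continuous_const (ee_cont a c')).inter
          (isOpen_lt continuous_const (ee_cont c' b))))
  · have e1 : ee b c a = ee a b c := by unfold ee; ring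
    have e2 : ee b c b = 0 := by unfold ee; ring
    have e3 : ee c a a = 0 := by unfold ee; ring
    have e4 : ee c a b = ee a b c := by unfold ee; ring
    have e5 : ee a c' a = 0 := by unfold ee; ring
    have e6 : ee a c' b = ee b a c' := by unfold ee; ring
    have e7 : ee c' b a = ee b a c' := by unfold ee; ring
    have e8 : ee c' b b = 0 := by unfold ee; ring
    refine ⟨?_, ?_, ?_, ?_⟩ <;> rw [ee_combo _ _ _ _ _ _ hus]
    · rw [e1, e2]; nlinarith
    · rw [e3, e4]; nlinarith
    · rw [e5, e6]; nlinarith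
    · rw [e7, e8]; nlinarith

lemma evt_not_mem {S : Set (ℝ × ℝ)} {p q x d : ℝ × ℝ}
    (hS : S ⊆ {y | 0 ≤ ee p q y})
    (h : (ee p q x ≤ 0 ∧ el p q d < 0) ∨ ee p q x < 0) :
    ∀ᶠ t in nhdsWithin (0:ℝ) (Set.Ioi 0), x + t • d ∉ S := by
  have key : ∀ᶠ t in nhdsWithin (0:ℝ) (Set.Ioi 0), ee p q (x + t • d) < 0 := by
    rcases h with ⟨hx0, hc⟩ | hx0
    · filter_upwards [self_mem_nhdsWithin] with t ht
      rw [ee_add_smul]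
      have : t * el p q d < 0 := mul_neg_of_pos_of_neg ht hc
      linarith
    · have hcont : Filter.Tendsto (fun t : ℝ => ee p q (x + t • d)) (nhds 0) (nhds (ee p q x)) := by
        have : Continuous (fun t : ℝ => ee p q (x + t • d)) := by
          apply (ee_cont p q).comp; fun_prop
        simpa using this.tendsto 0
      exact (hcont.eventually (Filter.Tendsto.eventually_lt_const hx0 Filter.tendsto_id)).filter_mono
        nhdsWithin_le_nhds
  filter_upwards [key] with t ht hmem
  exact absurd (hS hmem) (not_le.2 ht)

lemma not_mem_interior_of_evt {Q : Set (ℝ × ℝ)} {x d : ℝ × ℝ}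
    (hd : ∀ᶠ t in nhdsWithin (0:ℝ) (Set.Ioi 0), x + t • d ∉ Q) : x ∉ interior Q := by
  intro hx
  have h1 : Filter.Tendsto (fun t : ℝ => x + t • d) (nhdsWithin (0:ℝ) (Set.Ioi 0)) (nhds x) := by
    have hc : Continuous (fun t : ℝ => x + t • d) := by fun_prop
    have := hc.tendsto 0
    simp only [zero_smul, add_zero] at this
    exact this.mono_left nhdsWithin_le_nhds
  have h2 : ∀ᶠ t in nhdsWithin (0:ℝ) (Set.Ioi 0), x + t • d ∈ Q :=
    h1.eventually_mem (mem_interior_iff_mem_nhds.mp hx)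
  obtain ⟨t, ht1, ht2⟩ := (h2.and hd).exists
  exact ht2 ht1


noncomputable def Q1 : Set (ℝ × ℝ) := convexHull ℝ {A3, A5, A4}
noncomputable def Q2 : Set (ℝ × ℝ) := convexHull ℝ {A3, A8, A5}
noncomputable def Q3 : Set (ℝ × ℝ) := convexHull ℝ {A5, A7, A6}
noncomputable def Q4 : Set (ℝ × ℝ) := convexHull ℝ {A5, A8, A7}
noncomputable def Q5 : Set (ℝ × ℝ) := convexHull ℝ {A3, A0, A8}
noncomputable def Q6 : Set (ℝ × ℝ) := convexHull ℝ {A3, A1, A0}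
noncomputable def Q7 : Set (ℝ × ℝ) := convexHull ℝ {A3, A2, A1}

noncomputable def PE : Set (ℝ × ℝ) := Q1 ∪ Q2 ∪ Q3 ∪ Q4 ∪ Q5 ∪ Q6 ∪ Q7

lemma D1 : 0 < ee A3 A5 A4 := by norm_num [ee, A0, A1, A2, A3, A4, A5, A6, A7, A8]
lemma D2 : 0 < ee A3 A8 A5 := by norm_num [ee, A0, A1, A2, A3, A4, A5, A6, A7, A8]
lemma D3 : 0 < ee A5 A7 A6 := by norm_num [ee, A0, A1, A2, A3, A4, A5, A6, A7, A8]
lemma D4 : 0 < ee A5 A8 A7 := by norm_num [ee, A0, A1, A2, A3, A4, A5, A6, A7, A8]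
lemma D5 : 0 < ee A3 A0 A8 := by norm_num [ee, A0, A1, A2, A3, A4, A5, A6, A7, A8]
lemma D6 : 0 < ee A3 A1 A0 := by norm_num [ee, A0, A1, A2, A3, A4, A5, A6, A7, A8]
lemma D7 : 0 < ee A3 A2 A1 := by norm_num [ee, A0, A1, A2, A3, A4, A5, A6, A7, A8]

lemma sub1_35 : Q1 ⊆ {y | 0 ≤ ee A3 A5 y} := fun _ hy => (tri_subset A3 A5 A4 D1 hy).1
lemma sub1_54 : Q1 ⊆ {y | 0 ≤ ee A5 A4 y} := fun _ hy => (tri_subset A3 A5 A4 D1 hy).2.1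
lemma sub1_43 : Q1 ⊆ {y | 0 ≤ ee A4 A3 y} := fun _ hy => (tri_subset A3 A5 A4 D1 hy).2.2
lemma sub2_38 : Q2 ⊆ {y | 0 ≤ ee A3 A8 y} := fun _ hy => (tri_subset A3 A8 A5 D2 hy).1
lemma sub2_85 : Q2 ⊆ {y | 0 ≤ ee A8 A5 y} := fun _ hy => (tri_subset A3 A8 A5 D2 hy).2.1
lemma sub2_53 : Q2 ⊆ {y | 0 ≤ ee A5 A3 y} := fun _ hy => (tri_subset A3 A8 A5 D2 hy).2.2
lemma sub3_57 : Q3 ⊆ {y | 0 ≤ ee A5 A7 y} := fun _ hy => (tri_subset A5 A7 A6 D3 hy).1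
lemma sub3_76 : Q3 ⊆ {y | 0 ≤ ee A7 A6 y} := fun _ hy => (tri_subset A5 A7 A6 D3 hy).2.1
lemma sub3_65 : Q3 ⊆ {y | 0 ≤ ee A6 A5 y} := fun _ hy => (tri_subset A5 A7 A6 D3 hy).2.2
lemma sub4_58 : Q4 ⊆ {y | 0 ≤ ee A5 A8 y} := fun _ hy => (tri_subset A5 A8 A7 D4 hy).1
lemma sub4_87 : Q4 ⊆ {y | 0 ≤ ee A8 A7 y} := fun _ hy => (tri_subset A5 A8 A7 D4 hy).2.1
lemma sub4_75 : Q4 ⊆ {y | 0 ≤ ee A7 A5 y} := fun _ hy => (tri_subset A5 A8 A7 D4 hy).2.2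
lemma sub5_30 : Q5 ⊆ {y | 0 ≤ ee A3 A0 y} := fun _ hy => (tri_subset A3 A0 A8 D5 hy).1
lemma sub5_08 : Q5 ⊆ {y | 0 ≤ ee A0 A8 y} := fun _ hy => (tri_subset A3 A0 A8 D5 hy).2.1
lemma sub5_83 : Q5 ⊆ {y | 0 ≤ ee A8 A3 y} := fun _ hy => (tri_subset A3 A0 A8 D5 hy).2.2
lemma sub6_31 : Q6 ⊆ {y | 0 ≤ ee A3 A1 y} := fun _ hy => (tri_subset A3 A1 A0 D6 hy).1
lemma sub6_10 : Q6 ⊆ {y | 0 ≤ ee A1 A0 y} := fun _ hy => (tri_subset A3 A1 A0 D6 hy).2.1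
lemma sub6_03 : Q6 ⊆ {y | 0 ≤ ee A0 A3 y} := fun _ hy => (tri_subset A3 A1 A0 D6 hy).2.2
lemma sub7_32 : Q7 ⊆ {y | 0 ≤ ee A3 A2 y} := fun _ hy => (tri_subset A3 A2 A1 D7 hy).1
lemma sub7_21 : Q7 ⊆ {y | 0 ≤ ee A2 A1 y} := fun _ hy => (tri_subset A3 A2 A1 D7 hy).2.1
lemma sub7_13 : Q7 ⊆ {y | 0 ≤ ee A1 A3 y} := fun _ hy => (tri_subset A3 A2 A1 D7 hy).2.2

lemma subPE_Q1 : Q1 ⊆ PE := fun _ hy => Or.inl (Or.inl (Or.inl (Or.inl (Or.inl (Or.inl (hy))))))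
lemma subPE_Q2 : Q2 ⊆ PE := fun _ hy => Or.inl (Or.inl (Or.inl (Or.inl (Or.inl (Or.inr (hy))))))
lemma subPE_Q3 : Q3 ⊆ PE := fun _ hy => Or.inl (Or.inl (Or.inl (Or.inl (Or.inr (hy)))))
lemma subPE_Q4 : Q4 ⊆ PE := fun _ hy => Or.inl (Or.inl (Or.inl (Or.inr (hy))))
lemma subPE_Q5 : Q5 ⊆ PE := fun _ hy => Or.inl (Or.inl (Or.inr (hy)))
lemma subPE_Q6 : Q6 ⊆ PE := fun _ hy => Or.inl (Or.inr (hy))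
lemma subPE_Q7 : Q7 ⊆ PE := fun _ hy => Or.inr (hy)

lemma not_mem_int_certs {x d : ℝ × ℝ}
    {p1 q1 : ℝ × ℝ} (hs1 : Q1 ⊆ {y | 0 ≤ ee p1 q1 y})
    {p2 q2 : ℝ × ℝ} (hs2 : Q2 ⊆ {y | 0 ≤ ee p2 q2 y})
    {p3 q3 : ℝ × ℝ} (hs3 : Q3 ⊆ {y | 0 ≤ ee p3 q3 y})
    {p4 q4 : ℝ × ℝ} (hs4 : Q4 ⊆ {y | 0 ≤ ee p4 q4 y})
    {p5 q5 : ℝ × ℝ} (hs5 : Q5 ⊆ {y | 0 ≤ ee p5 q5 y})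
    {p6 q6 : ℝ × ℝ} (hs6 : Q6 ⊆ {y | 0 ≤ ee p6 q6 y})
    {p7 q7 : ℝ × ℝ} (hs7 : Q7 ⊆ {y | 0 ≤ ee p7 q7 y})
    (hc1 : (ee p1 q1 x ≤ 0 ∧ el p1 q1 d < 0) ∨ ee p1 q1 x < 0)
    (hc2 : (ee p2 q2 x ≤ 0 ∧ el p2 q2 d < 0) ∨ ee p2 q2 x < 0)
    (hc3 : (ee p3 q3 x ≤ 0 ∧ el p3 q3 d < 0) ∨ ee p3 q3 x < 0)
    (hc4 : (ee p4 q4 x ≤ 0 ∧ el p4 q4 d < 0) ∨ ee p4 q4 x < 0)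
    (hc5 : (ee p5 q5 x ≤ 0 ∧ el p5 q5 d < 0) ∨ ee p5 q5 x < 0)
    (hc6 : (ee p6 q6 x ≤ 0 ∧ el p6 q6 d < 0) ∨ ee p6 q6 x < 0)
    (hc7 : (ee p7 q7 x ≤ 0 ∧ el p7 q7 d < 0) ∨ ee p7 q7 x < 0)
    : x ∉ interior PE := by
  apply not_mem_interior_of_evt (d := d)
  filter_upwards [evt_not_mem hs1 hc1, evt_not_mem hs2 hc2, evt_not_mem hs3 hc3, evt_not_mem hs4 hc4, evt_not_mem hs5 hc5, evt_not_mem hs6 hc6, evt_not_mem hs7 hc7] with t h1 h2 h3 h4 h5 h6 h7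
  simp only [PE, Set.mem_union, not_or]
  exact ⟨⟨⟨⟨⟨⟨h1, h2⟩, h3⟩, h4⟩, h5⟩, h6⟩, h7⟩

lemma int35 : openSegment ℝ A3 A5 ⊆ interior PE :=
  diag_int A3 A5 A4 A8 (by norm_num [ee, A0, A1, A2, A3, A4, A5, A6, A7, A8]) (by norm_num [ee, A0, A1, A2, A3, A4, A5, A6, A7, A8])
    subPE_Q1 (by rw [show ({A5, A3, A8} : Set (ℝ × ℝ)) = {A3, A8, A5} from by ext z; simp only [Set.mem_insert_iff, Set.mem_singleton_iff]; tauto]; exact subPE_Q2)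

lemma int85 : openSegment ℝ A8 A5 ⊆ interior PE :=
  diag_int A8 A5 A3 A7 (by norm_num [ee, A0, A1, A2, A3, A4, A5, A6, A7, A8]) (by norm_num [ee, A0, A1, A2, A3, A4, A5, A6, A7, A8])
    (by rw [show ({A8, A5, A3} : Set (ℝ × ℝ)) = {A3, A8, A5} from by ext z; simp only [Set.mem_insert_iff, Set.mem_singleton_iff]; tauto]; exact subPE_Q2) subPE_Q4

lemma int57 : openSegment ℝ A5 A7 ⊆ interior PE :=
  diag_int A5 A7 A6 A8 (by norm_num [ee, A0, A1, A2, A3, A4, A5, A6, A7, A8]) (by norm_num [ee, A0, A1, A2, A3, A4, A5, A6, A7, A8])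
    subPE_Q3 (by rw [show ({A7, A5, A8} : Set (ℝ × ℝ)) = {A5, A8, A7} from by ext z; simp only [Set.mem_insert_iff, Set.mem_singleton_iff]; tauto]; exact subPE_Q4)

lemma int38 : openSegment ℝ A3 A8 ⊆ interior PE :=
  diag_int A3 A8 A5 A0 (by norm_num [ee, A0, A1, A2, A3, A4, A5, A6, A7, A8]) (by norm_num [ee, A0, A1, A2, A3, A4, A5, A6, A7, A8])
    subPE_Q2 (by rw [show ({A8, A3, A0} : Set (ℝ × ℝ)) = {A3, A0, A8} from by ext z; simp only [Set.mem_insert_iff, Set.mem_singleton_iff]; tauto]; exact subPE_Q5)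

lemma int30 : openSegment ℝ A3 A0 ⊆ interior PE :=
  diag_int A3 A0 A8 A1 (by norm_num [ee, A0, A1, A2, A3, A4, A5, A6, A7, A8]) (by norm_num [ee, A0, A1, A2, A3, A4, A5, A6, A7, A8])
    subPE_Q5 (by rw [show ({A0, A3, A1} : Set (ℝ × ℝ)) = {A3, A1, A0} from by ext z; simp only [Set.mem_insert_iff, Set.mem_singleton_iff]; tauto]; exact subPE_Q6)

lemma int31 : openSegment ℝ A3 A1 ⊆ interior PE :=
  diag_int A3 A1 A0 A2 (by norm_num [ee, A0, A1, A2, A3, A4, A5, A6, A7, A8]) (by norm_num [ee, A0, A1, A2, A3, A4, A5, A6, A7, A8])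
    subPE_Q6 (by rw [show ({A1, A3, A2} : Set (ℝ × ℝ)) = {A3, A2, A1} from by ext z; simp only [Set.mem_insert_iff, Set.mem_singleton_iff]; tauto]; exact subPE_Q7)

lemma bd01 : ∀ u s : ℝ, 0 ≤ u → 0 ≤ s → u + s = 1 → (u • A0 + s • A1) ∉ interior PE := by
  intro u s hu hs hus
  rcases le_or_gt s (2/7) with hc0 | hc0
  ·
    refine not_mem_int_certs (d := (((-5 : ℝ)), ((-8 : ℝ)))) sub1_35 sub2_38 sub3_57 sub4_58 sub5_30 sub6_10 sub7_21
      (Or.inl ⟨by rw [ee_combo _ _ _ _ _ _ hus]; norm_num [ee, A0, A1, A2, A3, A4, A5, A6, A7, A8] <;> linarith, by norm_num [el, A0, A1, A2, A3, A4, A5, A6, A7, A8]⟩)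
      (Or.inr (by rw [ee_combo _ _ _ _ _ _ hus]; norm_num [ee, A0, A1, A2, A3, A4, A5, A6, A7, A8] <;> linarith))
      (Or.inr (by rw [ee_combo _ _ _ _ _ _ hus]; norm_num [ee, A0, A1, A2, A3, A4, A5, A6, A7, A8] <;> linarith))
      (Or.inr (by rw [ee_combo _ _ _ _ _ _ hus]; norm_num [ee, A0, A1, A2, A3, A4, A5, A6, A7, A8] <;> linarith))
      (Or.inl ⟨by rw [ee_combo _ _ _ _ _ _ hus]; norm_num [ee, A0, A1, A2, A3, A4, A5, A6, A7, A8] <;> linarith, by norm_num [el, A0, A1, A2, A3, A4, A5, A6, A7, A8]⟩)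
      (Or.inl ⟨by rw [ee_combo _ _ _ _ _ _ hus]; norm_num [ee, A0, A1, A2, A3, A4, A5, A6, A7, A8] <;> linarith, by norm_num [el, A0, A1, A2, A3, A4, A5, A6, A7, A8]⟩)
      (Or.inr (by rw [ee_combo _ _ _ _ _ _ hus]; norm_num [ee, A0, A1, A2, A3, A4, A5, A6, A7, A8] <;> linarith))
  refine not_mem_int_certs (d := (((-8 : ℝ)), ((-8 : ℝ)))) sub1_43 sub2_53 sub3_57 sub4_58 sub5_30 sub6_10 sub7_21
    (Or.inr (by rw [ee_combo _ _ _ _ _ _ hus]; norm_num [ee, A0, A1, A2, A3, A4, A5, A6, A7, A8] <;> linarith))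
    (Or.inl ⟨by rw [ee_combo _ _ _ _ _ _ hus]; norm_num [ee, A0, A1, A2, A3, A4, A5, A6, A7, A8] <;> linarith, by norm_num [el, A0, A1, A2, A3, A4, A5, A6, A7, A8]⟩)
    (Or.inr (by rw [ee_combo _ _ _ _ _ _ hus]; norm_num [ee, A0, A1, A2, A3, A4, A5, A6, A7, A8] <;> linarith))
    (Or.inr (by rw [ee_combo _ _ _ _ _ _ hus]; norm_num [ee, A0, A1, A2, A3, A4, A5, A6, A7, A8] <;> linarith))
    (Or.inr (by rw [ee_combo _ _ _ _ _ _ hus]; norm_num [ee, A0, A1, A2, A3, A4, A5, A6, A7, A8] <;> linarith))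
    (Or.inl ⟨by rw [ee_combo _ _ _ _ _ _ hus]; norm_num [ee, A0, A1, A2, A3, A4, A5, A6, A7, A8] <;> linarith, by norm_num [el, A0, A1, A2, A3, A4, A5, A6, A7, A8]⟩)
    (Or.inl ⟨by rw [ee_combo _ _ _ _ _ _ hus]; norm_num [ee, A0, A1, A2, A3, A4, A5, A6, A7, A8] <;> linarith, by norm_num [el, A0, A1, A2, A3, A4, A5, A6, A7, A8]⟩)

lemma bd12 : ∀ u s : ℝ, 0 ≤ u → 0 ≤ s → u + s = 1 → (u • A1 + s • A2) ∉ interior PE := by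
  intro u s hu hs hus
  refine not_mem_int_certs (d := (((-8 : ℝ)), ((-8 : ℝ)))) sub1_43 sub2_53 sub3_57 sub4_58 sub5_30 sub6_10 sub7_21
    (Or.inr (by rw [ee_combo _ _ _ _ _ _ hus]; norm_num [ee, A0, A1, A2, A3, A4, A5, A6, A7, A8] <;> linarith))
    (Or.inr (by rw [ee_combo _ _ _ _ _ _ hus]; norm_num [ee, A0, A1, A2, A3, A4, A5, A6, A7, A8] <;> linarith))
    (Or.inr (by rw [ee_combo _ _ _ _ _ _ hus]; norm_num [ee, A0, A1, A2, A3, A4, A5, A6, A7, A8] <;> linarith))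
    (Or.inr (by rw [ee_combo _ _ _ _ _ _ hus]; norm_num [ee, A0, A1, A2, A3, A4, A5, A6, A7, A8] <;> linarith))
    (Or.inr (by rw [ee_combo _ _ _ _ _ _ hus]; norm_num [ee, A0, A1, A2, A3, A4, A5, A6, A7, A8] <;> linarith))
    (Or.inl ⟨by rw [ee_combo _ _ _ _ _ _ hus]; norm_num [ee, A0, A1, A2, A3, A4, A5, A6, A7, A8] <;> linarith, by norm_num [el, A0, A1, A2, A3, A4, A5, A6, A7, A8]⟩)
    (Or.inl ⟨by rw [ee_combo _ _ _ _ _ _ hus]; norm_num [ee, A0, A1, A2, A3, A4, A5, A6, A7, A8] <;> linarith, by norm_num [el, A0, A1, A2, A3, A4, A5, A6, A7, A8]⟩)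

lemma bd23 : ∀ u s : ℝ, 0 ≤ u → 0 ≤ s → u + s = 1 → (u • A2 + s • A3) ∉ interior PE := by
  intro u s hu hs hus
  refine not_mem_int_certs (d := (((-3 : ℝ)), (7 : ℝ))) sub1_43 sub2_53 sub3_57 sub4_58 sub5_30 sub6_31 sub7_32
    (Or.inl ⟨by rw [ee_combo _ _ _ _ _ _ hus]; norm_num [ee, A0, A1, A2, A3, A4, A5, A6, A7, A8] <;> linarith, by norm_num [el, A0, A1, A2, A3, A4, A5, A6, A7, A8]⟩)
    (Or.inl ⟨by rw [ee_combo _ _ _ _ _ _ hus]; norm_num [ee, A0, A1, A2, A3, A4, A5, A6, A7, A8] <;> linarith, by norm_num [el, A0, A1, A2, A3, A4, A5, A6, A7, A8]⟩)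
    (Or.inr (by rw [ee_combo _ _ _ _ _ _ hus]; norm_num [ee, A0, A1, A2, A3, A4, A5, A6, A7, A8] <;> linarith))
    (Or.inr (by rw [ee_combo _ _ _ _ _ _ hus]; norm_num [ee, A0, A1, A2, A3, A4, A5, A6, A7, A8] <;> linarith))
    (Or.inl ⟨by rw [ee_combo _ _ _ _ _ _ hus]; norm_num [ee, A0, A1, A2, A3, A4, A5, A6, A7, A8] <;> linarith, by norm_num [el, A0, A1, A2, A3, A4, A5, A6, A7, A8]⟩)
    (Or.inl ⟨by rw [ee_combo _ _ _ _ _ _ hus]; norm_num [ee, A0, A1, A2, A3, A4, A5, A6, A7, A8] <;> linarith, by norm_num [el, A0, A1, A2, A3, A4, A5, A6, A7, A8]⟩)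
    (Or.inl ⟨by rw [ee_combo _ _ _ _ _ _ hus]; norm_num [ee, A0, A1, A2, A3, A4, A5, A6, A7, A8] <;> linarith, by norm_num [el, A0, A1, A2, A3, A4, A5, A6, A7, A8]⟩)

lemma bd34 : ∀ u s : ℝ, 0 ≤ u → 0 ≤ s → u + s = 1 → (u • A3 + s • A4) ∉ interior PE := by
  intro u s hu hs hus
  rcases le_or_gt s (9/20) with hc0 | hc0
  ·
    refine not_mem_int_certs (d := (((-3 : ℝ)), (7 : ℝ))) sub1_43 sub2_53 sub3_57 sub4_58 sub5_83 sub6_31 sub7_32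
      (Or.inl ⟨by rw [ee_combo _ _ _ _ _ _ hus]; norm_num [ee, A0, A1, A2, A3, A4, A5, A6, A7, A8] <;> linarith, by norm_num [el, A0, A1, A2, A3, A4, A5, A6, A7, A8]⟩)
      (Or.inl ⟨by rw [ee_combo _ _ _ _ _ _ hus]; norm_num [ee, A0, A1, A2, A3, A4, A5, A6, A7, A8] <;> linarith, by norm_num [el, A0, A1, A2, A3, A4, A5, A6, A7, A8]⟩)
      (Or.inr (by rw [ee_combo _ _ _ _ _ _ hus]; norm_num [ee, A0, A1, A2, A3, A4, A5, A6, A7, A8] <;> linarith))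
      (Or.inr (by rw [ee_combo _ _ _ _ _ _ hus]; norm_num [ee, A0, A1, A2, A3, A4, A5, A6, A7, A8] <;> linarith))
      (Or.inl ⟨by rw [ee_combo _ _ _ _ _ _ hus]; norm_num [ee, A0, A1, A2, A3, A4, A5, A6, A7, A8] <;> linarith, by norm_num [el, A0, A1, A2, A3, A4, A5, A6, A7, A8]⟩)
      (Or.inl ⟨by rw [ee_combo _ _ _ _ _ _ hus]; norm_num [ee, A0, A1, A2, A3, A4, A5, A6, A7, A8] <;> linarith, by norm_num [el, A0, A1, A2, A3, A4, A5, A6, A7, A8]⟩)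
      (Or.inl ⟨by rw [ee_combo _ _ _ _ _ _ hus]; norm_num [ee, A0, A1, A2, A3, A4, A5, A6, A7, A8] <;> linarith, by norm_num [el, A0, A1, A2, A3, A4, A5, A6, A7, A8]⟩)
  rcases le_or_gt s (6/13) with hc1 | hc1
  ·
    refine not_mem_int_certs (d := (((-8 : ℝ)), ((-8 : ℝ)))) sub1_43 sub2_53 sub3_65 sub4_58 sub5_83 sub6_31 sub7_32
      (Or.inl ⟨by rw [ee_combo _ _ _ _ _ _ hus]; norm_num [ee, A0, A1, A2, A3, A4, A5, A6, A7, A8] <;> linarith, by norm_num [el, A0, A1, A2, A3, A4, A5, A6, A7, A8]⟩)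
      (Or.inr (by rw [ee_combo _ _ _ _ _ _ hus]; norm_num [ee, A0, A1, A2, A3, A4, A5, A6, A7, A8] <;> linarith))
      (Or.inr (by rw [ee_combo _ _ _ _ _ _ hus]; norm_num [ee, A0, A1, A2, A3, A4, A5, A6, A7, A8] <;> linarith))
      (Or.inl ⟨by rw [ee_combo _ _ _ _ _ _ hus]; norm_num [ee, A0, A1, A2, A3, A4, A5, A6, A7, A8] <;> linarith, by norm_num [el, A0, A1, A2, A3, A4, A5, A6, A7, A8]⟩)
      (Or.inr (by rw [ee_combo _ _ _ _ _ _ hus]; norm_num [ee, A0, A1, A2, A3, A4, A5, A6, A7, A8] <;> linarith))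
      (Or.inr (by rw [ee_combo _ _ _ _ _ _ hus]; norm_num [ee, A0, A1, A2, A3, A4, A5, A6, A7, A8] <;> linarith))
      (Or.inr (by rw [ee_combo _ _ _ _ _ _ hus]; norm_num [ee, A0, A1, A2, A3, A4, A5, A6, A7, A8] <;> linarith))
  refine not_mem_int_certs (d := (((-8 : ℝ)), ((-8 : ℝ)))) sub1_43 sub2_53 sub3_65 sub4_75 sub5_83 sub6_31 sub7_32
    (Or.inl ⟨by rw [ee_combo _ _ _ _ _ _ hus]; norm_num [ee, A0, A1, A2, A3, A4, A5, A6, A7, A8] <;> linarith, by norm_num [el, A0, A1, A2, A3, A4, A5, A6, A7, A8]⟩)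
    (Or.inr (by rw [ee_combo _ _ _ _ _ _ hus]; norm_num [ee, A0, A1, A2, A3, A4, A5, A6, A7, A8] <;> linarith))
    (Or.inr (by rw [ee_combo _ _ _ _ _ _ hus]; norm_num [ee, A0, A1, A2, A3, A4, A5, A6, A7, A8] <;> linarith))
    (Or.inr (by rw [ee_combo _ _ _ _ _ _ hus]; norm_num [ee, A0, A1, A2, A3, A4, A5, A6, A7, A8] <;> linarith))
    (Or.inr (by rw [ee_combo _ _ _ _ _ _ hus]; norm_num [ee, A0, A1, A2, A3, A4, A5, A6, A7, A8] <;> linarith))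
    (Or.inr (by rw [ee_combo _ _ _ _ _ _ hus]; norm_num [ee, A0, A1, A2, A3, A4, A5, A6, A7, A8] <;> linarith))
    (Or.inr (by rw [ee_combo _ _ _ _ _ _ hus]; norm_num [ee, A0, A1, A2, A3, A4, A5, A6, A7, A8] <;> linarith))

lemma bd45 : ∀ u s : ℝ, 0 ≤ u → 0 ≤ s → u + s = 1 → (u • A4 + s • A5) ∉ interior PE := by
  intro u s hu hs hus
  refine not_mem_int_certs (d := ((1 : ℝ), (0 : ℝ))) sub1_54 sub2_85 sub3_65 sub4_75 sub5_83 sub6_31 sub7_32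
    (Or.inl ⟨by rw [ee_combo _ _ _ _ _ _ hus]; norm_num [ee, A0, A1, A2, A3, A4, A5, A6, A7, A8] <;> linarith, by norm_num [el, A0, A1, A2, A3, A4, A5, A6, A7, A8]⟩)
    (Or.inl ⟨by rw [ee_combo _ _ _ _ _ _ hus]; norm_num [ee, A0, A1, A2, A3, A4, A5, A6, A7, A8] <;> linarith, by norm_num [el, A0, A1, A2, A3, A4, A5, A6, A7, A8]⟩)
    (Or.inl ⟨by rw [ee_combo _ _ _ _ _ _ hus]; norm_num [ee, A0, A1, A2, A3, A4, A5, A6, A7, A8] <;> linarith, by norm_num [el, A0, A1, A2, A3, A4, A5, A6, A7, A8]⟩)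
    (Or.inl ⟨by rw [ee_combo _ _ _ _ _ _ hus]; norm_num [ee, A0, A1, A2, A3, A4, A5, A6, A7, A8] <;> linarith, by norm_num [el, A0, A1, A2, A3, A4, A5, A6, A7, A8]⟩)
    (Or.inr (by rw [ee_combo _ _ _ _ _ _ hus]; norm_num [ee, A0, A1, A2, A3, A4, A5, A6, A7, A8] <;> linarith))
    (Or.inr (by rw [ee_combo _ _ _ _ _ _ hus]; norm_num [ee, A0, A1, A2, A3, A4, A5, A6, A7, A8] <;> linarith))
    (Or.inr (by rw [ee_combo _ _ _ _ _ _ hus]; norm_num [ee, A0, A1, A2, A3, A4, A5, A6, A7, A8] <;> linarith))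

lemma bd56 : ∀ u s : ℝ, 0 ≤ u → 0 ≤ s → u + s = 1 → (u • A5 + s • A6) ∉ interior PE := by
  intro u s hu hs hus
  rcases le_or_gt s (3/8) with hc0 | hc0
  ·
    refine not_mem_int_certs (d := ((1 : ℝ), (1 : ℝ))) sub1_35 sub2_85 sub3_65 sub4_75 sub5_83 sub6_31 sub7_32
      (Or.inl ⟨by rw [ee_combo _ _ _ _ _ _ hus]; norm_num [ee, A0, A1, A2, A3, A4, A5, A6, A7, A8] <;> linarith, by norm_num [el, A0, A1, A2, A3, A4, A5, A6, A7, A8]⟩)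
      (Or.inl ⟨by rw [ee_combo _ _ _ _ _ _ hus]; norm_num [ee, A0, A1, A2, A3, A4, A5, A6, A7, A8] <;> linarith, by norm_num [el, A0, A1, A2, A3, A4, A5, A6, A7, A8]⟩)
      (Or.inl ⟨by rw [ee_combo _ _ _ _ _ _ hus]; norm_num [ee, A0, A1, A2, A3, A4, A5, A6, A7, A8] <;> linarith, by norm_num [el, A0, A1, A2, A3, A4, A5, A6, A7, A8]⟩)
      (Or.inl ⟨by rw [ee_combo _ _ _ _ _ _ hus]; norm_num [ee, A0, A1, A2, A3, A4, A5, A6, A7, A8] <;> linarith, by norm_num [el, A0, A1, A2, A3, A4, A5, A6, A7, A8]⟩)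
      (Or.inl ⟨by rw [ee_combo _ _ _ _ _ _ hus]; norm_num [ee, A0, A1, A2, A3, A4, A5, A6, A7, A8] <;> linarith, by norm_num [el, A0, A1, A2, A3, A4, A5, A6, A7, A8]⟩)
      (Or.inr (by rw [ee_combo _ _ _ _ _ _ hus]; norm_num [ee, A0, A1, A2, A3, A4, A5, A6, A7, A8] <;> linarith))
      (Or.inr (by rw [ee_combo _ _ _ _ _ _ hus]; norm_num [ee, A0, A1, A2, A3, A4, A5, A6, A7, A8] <;> linarith))
  refine not_mem_int_certs (d := (((-8 : ℝ)), (6 : ℝ))) sub1_35 sub2_85 sub3_65 sub4_75 sub5_08 sub6_31 sub7_32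
    (Or.inr (by rw [ee_combo _ _ _ _ _ _ hus]; norm_num [ee, A0, A1, A2, A3, A4, A5, A6, A7, A8] <;> linarith))
    (Or.inr (by rw [ee_combo _ _ _ _ _ _ hus]; norm_num [ee, A0, A1, A2, A3, A4, A5, A6, A7, A8] <;> linarith))
    (Or.inl ⟨by rw [ee_combo _ _ _ _ _ _ hus]; norm_num [ee, A0, A1, A2, A3, A4, A5, A6, A7, A8] <;> linarith, by norm_num [el, A0, A1, A2, A3, A4, A5, A6, A7, A8]⟩)
    (Or.inr (by rw [ee_combo _ _ _ _ _ _ hus]; norm_num [ee, A0, A1, A2, A3, A4, A5, A6, A7, A8] <;> linarith))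
    (Or.inr (by rw [ee_combo _ _ _ _ _ _ hus]; norm_num [ee, A0, A1, A2, A3, A4, A5, A6, A7, A8] <;> linarith))
    (Or.inr (by rw [ee_combo _ _ _ _ _ _ hus]; norm_num [ee, A0, A1, A2, A3, A4, A5, A6, A7, A8] <;> linarith))
    (Or.inr (by rw [ee_combo _ _ _ _ _ _ hus]; norm_num [ee, A0, A1, A2, A3, A4, A5, A6, A7, A8] <;> linarith))

lemma bd67 : ∀ u s : ℝ, 0 ≤ u → 0 ≤ s → u + s = 1 → (u • A6 + s • A7) ∉ interior PE := by
  intro u s hu hs hus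
  refine not_mem_int_certs (d := (((-8 : ℝ)), ((-8 : ℝ)))) sub1_35 sub2_38 sub3_76 sub4_87 sub5_08 sub6_31 sub7_32
    (Or.inr (by rw [ee_combo _ _ _ _ _ _ hus]; norm_num [ee, A0, A1, A2, A3, A4, A5, A6, A7, A8] <;> linarith))
    (Or.inr (by rw [ee_combo _ _ _ _ _ _ hus]; norm_num [ee, A0, A1, A2, A3, A4, A5, A6, A7, A8] <;> linarith))
    (Or.inl ⟨by rw [ee_combo _ _ _ _ _ _ hus]; norm_num [ee, A0, A1, A2, A3, A4, A5, A6, A7, A8] <;> linarith, by norm_num [el, A0, A1, A2, A3, A4, A5, A6, A7, A8]⟩)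
    (Or.inl ⟨by rw [ee_combo _ _ _ _ _ _ hus]; norm_num [ee, A0, A1, A2, A3, A4, A5, A6, A7, A8] <;> linarith, by norm_num [el, A0, A1, A2, A3, A4, A5, A6, A7, A8]⟩)
    (Or.inr (by rw [ee_combo _ _ _ _ _ _ hus]; norm_num [ee, A0, A1, A2, A3, A4, A5, A6, A7, A8] <;> linarith))
    (Or.inr (by rw [ee_combo _ _ _ _ _ _ hus]; norm_num [ee, A0, A1, A2, A3, A4, A5, A6, A7, A8] <;> linarith))
    (Or.inr (by rw [ee_combo _ _ _ _ _ _ hus]; norm_num [ee, A0, A1, A2, A3, A4, A5, A6, A7, A8] <;> linarith))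

lemma bd78 : ∀ u s : ℝ, 0 ≤ u → 0 ≤ s → u + s = 1 → (u • A7 + s • A8) ∉ interior PE := by
  intro u s hu hs hus
  refine not_mem_int_certs (d := (((-8 : ℝ)), ((-8 : ℝ)))) sub1_35 sub2_38 sub3_57 sub4_87 sub5_08 sub6_31 sub7_32
    (Or.inr (by rw [ee_combo _ _ _ _ _ _ hus]; norm_num [ee, A0, A1, A2, A3, A4, A5, A6, A7, A8] <;> linarith))
    (Or.inl ⟨by rw [ee_combo _ _ _ _ _ _ hus]; norm_num [ee, A0, A1, A2, A3, A4, A5, A6, A7, A8] <;> linarith, by norm_num [el, A0, A1, A2, A3, A4, A5, A6, A7, A8]⟩)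
    (Or.inl ⟨by rw [ee_combo _ _ _ _ _ _ hus]; norm_num [ee, A0, A1, A2, A3, A4, A5, A6, A7, A8] <;> linarith, by norm_num [el, A0, A1, A2, A3, A4, A5, A6, A7, A8]⟩)
    (Or.inl ⟨by rw [ee_combo _ _ _ _ _ _ hus]; norm_num [ee, A0, A1, A2, A3, A4, A5, A6, A7, A8] <;> linarith, by norm_num [el, A0, A1, A2, A3, A4, A5, A6, A7, A8]⟩)
    (Or.inl ⟨by rw [ee_combo _ _ _ _ _ _ hus]; norm_num [ee, A0, A1, A2, A3, A4, A5, A6, A7, A8] <;> linarith, by norm_num [el, A0, A1, A2, A3, A4, A5, A6, A7, A8]⟩)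
    (Or.inr (by rw [ee_combo _ _ _ _ _ _ hus]; norm_num [ee, A0, A1, A2, A3, A4, A5, A6, A7, A8] <;> linarith))
    (Or.inr (by rw [ee_combo _ _ _ _ _ _ hus]; norm_num [ee, A0, A1, A2, A3, A4, A5, A6, A7, A8] <;> linarith))

lemma bd80 : ∀ u s : ℝ, 0 ≤ u → 0 ≤ s → u + s = 1 → (u • A8 + s • A0) ∉ interior PE := by
  intro u s hu hs hus
  rcases le_or_gt s (1/2) with hc0 | hc0
  ·
    refine not_mem_int_certs (d := ((1 : ℝ), ((-1 : ℝ)))) sub1_35 sub2_38 sub3_57 sub4_87 sub5_08 sub6_03 sub7_32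
      (Or.inr (by rw [ee_combo _ _ _ _ _ _ hus]; norm_num [ee, A0, A1, A2, A3, A4, A5, A6, A7, A8] <;> linarith))
      (Or.inl ⟨by rw [ee_combo _ _ _ _ _ _ hus]; norm_num [ee, A0, A1, A2, A3, A4, A5, A6, A7, A8] <;> linarith, by norm_num [el, A0, A1, A2, A3, A4, A5, A6, A7, A8]⟩)
      (Or.inr (by rw [ee_combo _ _ _ _ _ _ hus]; norm_num [ee, A0, A1, A2, A3, A4, A5, A6, A7, A8] <;> linarith))
      (Or.inl ⟨by rw [ee_combo _ _ _ _ _ _ hus]; norm_num [ee, A0, A1, A2, A3, A4, A5, A6, A7, A8] <;> linarith, by norm_num [el, A0, A1, A2, A3, A4, A5, A6, A7, A8]⟩)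
      (Or.inl ⟨by rw [ee_combo _ _ _ _ _ _ hus]; norm_num [ee, A0, A1, A2, A3, A4, A5, A6, A7, A8] <;> linarith, by norm_num [el, A0, A1, A2, A3, A4, A5, A6, A7, A8]⟩)
      (Or.inr (by rw [ee_combo _ _ _ _ _ _ hus]; norm_num [ee, A0, A1, A2, A3, A4, A5, A6, A7, A8] <;> linarith))
      (Or.inl ⟨by rw [ee_combo _ _ _ _ _ _ hus]; norm_num [ee, A0, A1, A2, A3, A4, A5, A6, A7, A8] <;> linarith, by norm_num [el, A0, A1, A2, A3, A4, A5, A6, A7, A8]⟩)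
  refine not_mem_int_certs (d := (((-3 : ℝ)), ((-8 : ℝ)))) sub1_35 sub2_38 sub3_57 sub4_58 sub5_08 sub6_03 sub7_13
    (Or.inr (by rw [ee_combo _ _ _ _ _ _ hus]; norm_num [ee, A0, A1, A2, A3, A4, A5, A6, A7, A8] <;> linarith))
    (Or.inr (by rw [ee_combo _ _ _ _ _ _ hus]; norm_num [ee, A0, A1, A2, A3, A4, A5, A6, A7, A8] <;> linarith))
    (Or.inr (by rw [ee_combo _ _ _ _ _ _ hus]; norm_num [ee, A0, A1, A2, A3, A4, A5, A6, A7, A8] <;> linarith))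
    (Or.inr (by rw [ee_combo _ _ _ _ _ _ hus]; norm_num [ee, A0, A1, A2, A3, A4, A5, A6, A7, A8] <;> linarith))
    (Or.inl ⟨by rw [ee_combo _ _ _ _ _ _ hus]; norm_num [ee, A0, A1, A2, A3, A4, A5, A6, A7, A8] <;> linarith, by norm_num [el, A0, A1, A2, A3, A4, A5, A6, A7, A8]⟩)
    (Or.inl ⟨by rw [ee_combo _ _ _ _ _ _ hus]; norm_num [ee, A0, A1, A2, A3, A4, A5, A6, A7, A8] <;> linarith, by norm_num [el, A0, A1, A2, A3, A4, A5, A6, A7, A8]⟩)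
    (Or.inr (by rw [ee_combo _ _ _ _ _ _ hus]; norm_num [ee, A0, A1, A2, A3, A4, A5, A6, A7, A8] <;> linarith))

lemma PE_def : PE = Q1 ∪ Q2 ∪ Q3 ∪ Q4 ∪ Q5 ∪ Q6 ∪ Q7 := rfl

lemma final_frontier : frontier PE = segment ℝ A0 A1 ∪ segment ℝ A1 A2 ∪ segment ℝ A2 A3 ∪ segment ℝ A3 A4 ∪ segment ℝ A4 A5 ∪ segment ℝ A5 A6 ∪ segment ℝ A6 A7 ∪ segment ℝ A7 A8 ∪ segment ℝ A8 A0 := by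
  have hclosed : IsClosed PE := by
    unfold PE Q1 Q2 Q3 Q4 Q5 Q6 Q7
    repeat' apply IsClosed.union
    all_goals exact (Set.Finite.isCompact_convexHull ℝ (Set.toFinite _)).isClosed
  rw [hclosed.frontier_eq]
  apply Subset.antisymm
  · rintro x ⟨hxP, hxI⟩
    rw [PE_def] at hxP
    rcases hxP with ((((((t1 | t2) | t3) | t4) | t5) | t6) | t7)
    · obtain ⟨e1, e2, e3⟩ := tri_subset A3 A5 A4 D1 t1
      rcases eq_or_lt_of_le e1 with z1 | z1
      · have hseg : x ∈ segment ℝ A3 A5 := edge_mem A3 A5 A4 x D1 z1.symm e2 e3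
        rw [← insert_endpoints_openSegment] at hseg
        rcases hseg with rfl | rfl | hop
        · exact Or.inl (Or.inl (Or.inl (Or.inl (Or.inl (Or.inl (Or.inr (right_mem_segment ℝ A2 A3)))))))
        · exact Or.inl (Or.inl (Or.inl (Or.inl (Or.inr (right_mem_segment ℝ A4 A5)))))
        · exact absurd (int35 hop) hxI
      rcases eq_or_lt_of_le e2 with z2 | z2
      · have hseg : x ∈ segment ℝ A5 A4 := edge_mem A5 A4 A3 x (by norm_num [ee, A0, A1, A2, A3, A4, A5, A6, A7, A8]) z2.symm e3 e1
        rw [segment_symm] at hseg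
        exact Or.inl (Or.inl (Or.inl (Or.inl (Or.inr (hseg)))))
      rcases eq_or_lt_of_le e3 with z3 | z3
      · have hseg : x ∈ segment ℝ A4 A3 := edge_mem A4 A3 A5 x (by norm_num [ee, A0, A1, A2, A3, A4, A5, A6, A7, A8]) z3.symm e1 e2
        rw [segment_symm] at hseg
        exact Or.inl (Or.inl (Or.inl (Or.inl (Or.inl (Or.inr (hseg))))))
      · exact absurd (strict_mem_int A3 A5 A4 subPE_Q1 D1 z1 z2 z3) hxI
    · obtain ⟨e1, e2, e3⟩ := tri_subset A3 A8 A5 D2 t2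
      rcases eq_or_lt_of_le e1 with z1 | z1
      · have hseg : x ∈ segment ℝ A3 A8 := edge_mem A3 A8 A5 x D2 z1.symm e2 e3
        rw [← insert_endpoints_openSegment] at hseg
        rcases hseg with rfl | rfl | hop
        · exact Or.inl (Or.inl (Or.inl (Or.inl (Or.inl (Or.inl (Or.inr (right_mem_segment ℝ A2 A3)))))))
        · exact Or.inl (Or.inr (right_mem_segment ℝ A7 A8))
        · exact absurd (int38 hop) hxI
      rcases eq_or_lt_of_le e2 with z2 | z2
      · have hseg : x ∈ segment ℝ A8 A5 := edge_mem A8 A5 A3 x (by norm_num [ee, A0, A1, A2, A3, A4, A5, A6, A7, A8]) z2.symm e3 e1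
        rw [← insert_endpoints_openSegment] at hseg
        rcases hseg with rfl | rfl | hop
        · exact Or.inl (Or.inr (right_mem_segment ℝ A7 A8))
        · exact Or.inl (Or.inl (Or.inl (Or.inl (Or.inr (right_mem_segment ℝ A4 A5)))))
        · exact absurd (int85 hop) hxI
      rcases eq_or_lt_of_le e3 with z3 | z3
      · have hseg : x ∈ segment ℝ A5 A3 := edge_mem A5 A3 A8 x (by norm_num [ee, A0, A1, A2, A3, A4, A5, A6, A7, A8]) z3.symm e1 e2
        rw [segment_symm] at hseg
        rw [← insert_endpoints_openSegment] at hseg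
        rcases hseg with rfl | rfl | hop
        · exact Or.inl (Or.inl (Or.inl (Or.inl (Or.inl (Or.inl (Or.inr (right_mem_segment ℝ A2 A3)))))))
        · exact Or.inl (Or.inl (Or.inl (Or.inl (Or.inr (right_mem_segment ℝ A4 A5)))))
        · exact absurd (int35 hop) hxI
      · exact absurd (strict_mem_int A3 A8 A5 subPE_Q2 D2 z1 z2 z3) hxI
    · obtain ⟨e1, e2, e3⟩ := tri_subset A5 A7 A6 D3 t3
      rcases eq_or_lt_of_le e1 with z1 | z1
      · have hseg : x ∈ segment ℝ A5 A7 := edge_mem A5 A7 A6 x D3 z1.symm e2 e3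
        rw [← insert_endpoints_openSegment] at hseg
        rcases hseg with rfl | rfl | hop
        · exact Or.inl (Or.inl (Or.inl (Or.inl (Or.inr (right_mem_segment ℝ A4 A5)))))
        · exact Or.inl (Or.inl (Or.inr (right_mem_segment ℝ A6 A7)))
        · exact absurd (int57 hop) hxI
      rcases eq_or_lt_of_le e2 with z2 | z2
      · have hseg : x ∈ segment ℝ A7 A6 := edge_mem A7 A6 A5 x (by norm_num [ee, A0, A1, A2, A3, A4, A5, A6, A7, A8]) z2.symm e3 e1
        rw [segment_symm] at hseg
        exact Or.inl (Or.inl (Or.inr (hseg)))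
      rcases eq_or_lt_of_le e3 with z3 | z3
      · have hseg : x ∈ segment ℝ A6 A5 := edge_mem A6 A5 A7 x (by norm_num [ee, A0, A1, A2, A3, A4, A5, A6, A7, A8]) z3.symm e1 e2
        rw [segment_symm] at hseg
        exact Or.inl (Or.inl (Or.inl (Or.inr (hseg))))
      · exact absurd (strict_mem_int A5 A7 A6 subPE_Q3 D3 z1 z2 z3) hxI
    · obtain ⟨e1, e2, e3⟩ := tri_subset A5 A8 A7 D4 t4
      rcases eq_or_lt_of_le e1 with z1 | z1
      · have hseg : x ∈ segment ℝ A5 A8 := edge_mem A5 A8 A7 x D4 z1.symm e2 e3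
        rw [segment_symm] at hseg
        rw [← insert_endpoints_openSegment] at hseg
        rcases hseg with rfl | rfl | hop
        · exact Or.inl (Or.inr (right_mem_segment ℝ A7 A8))
        · exact Or.inl (Or.inl (Or.inl (Or.inl (Or.inr (right_mem_segment ℝ A4 A5)))))
        · exact absurd (int85 hop) hxI
      rcases eq_or_lt_of_le e2 with z2 | z2
      · have hseg : x ∈ segment ℝ A8 A7 := edge_mem A8 A7 A5 x (by norm_num [ee, A0, A1, A2, A3, A4, A5, A6, A7, A8]) z2.symm e3 e1
        rw [segment_symm] at hseg
        exact Or.inl (Or.inr (hseg))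
      rcases eq_or_lt_of_le e3 with z3 | z3
      · have hseg : x ∈ segment ℝ A7 A5 := edge_mem A7 A5 A8 x (by norm_num [ee, A0, A1, A2, A3, A4, A5, A6, A7, A8]) z3.symm e1 e2
        rw [segment_symm] at hseg
        rw [← insert_endpoints_openSegment] at hseg
        rcases hseg with rfl | rfl | hop
        · exact Or.inl (Or.inl (Or.inl (Or.inl (Or.inr (right_mem_segment ℝ A4 A5)))))
        · exact Or.inl (Or.inl (Or.inr (right_mem_segment ℝ A6 A7)))
        · exact absurd (int57 hop) hxI
      · exact absurd (strict_mem_int A5 A8 A7 subPE_Q4 D4 z1 z2 z3) hxI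
    · obtain ⟨e1, e2, e3⟩ := tri_subset A3 A0 A8 D5 t5
      rcases eq_or_lt_of_le e1 with z1 | z1
      · have hseg : x ∈ segment ℝ A3 A0 := edge_mem A3 A0 A8 x D5 z1.symm e2 e3
        rw [← insert_endpoints_openSegment] at hseg
        rcases hseg with rfl | rfl | hop
        · exact Or.inl (Or.inl (Or.inl (Or.inl (Or.inl (Or.inl (Or.inr (right_mem_segment ℝ A2 A3)))))))
        · exact Or.inl (Or.inl (Or.inl (Or.inl (Or.inl (Or.inl (Or.inl (Or.inl (left_mem_segment ℝ A0 A1))))))))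
        · exact absurd (int30 hop) hxI
      rcases eq_or_lt_of_le e2 with z2 | z2
      · have hseg : x ∈ segment ℝ A0 A8 := edge_mem A0 A8 A3 x (by norm_num [ee, A0, A1, A2, A3, A4, A5, A6, A7, A8]) z2.symm e3 e1
        rw [segment_symm] at hseg
        exact Or.inr (hseg)
      rcases eq_or_lt_of_le e3 with z3 | z3
      · have hseg : x ∈ segment ℝ A8 A3 := edge_mem A8 A3 A0 x (by norm_num [ee, A0, A1, A2, A3, A4, A5, A6, A7, A8]) z3.symm e1 e2
        rw [segment_symm] at hseg
        rw [← insert_endpoints_openSegment] at hseg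
        rcases hseg with rfl | rfl | hop
        · exact Or.inl (Or.inl (Or.inl (Or.inl (Or.inl (Or.inl (Or.inr (right_mem_segment ℝ A2 A3)))))))
        · exact Or.inl (Or.inr (right_mem_segment ℝ A7 A8))
        · exact absurd (int38 hop) hxI
      · exact absurd (strict_mem_int A3 A0 A8 subPE_Q5 D5 z1 z2 z3) hxI
    · obtain ⟨e1, e2, e3⟩ := tri_subset A3 A1 A0 D6 t6
      rcases eq_or_lt_of_le e1 with z1 | z1
      · have hseg : x ∈ segment ℝ A3 A1 := edge_mem A3 A1 A0 x D6 z1.symm e2 e3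
        rw [← insert_endpoints_openSegment] at hseg
        rcases hseg with rfl | rfl | hop
        · exact Or.inl (Or.inl (Or.inl (Or.inl (Or.inl (Or.inl (Or.inr (right_mem_segment ℝ A2 A3)))))))
        · exact Or.inl (Or.inl (Or.inl (Or.inl (Or.inl (Or.inl (Or.inl (Or.inl (right_mem_segment ℝ A0 A1))))))))
        · exact absurd (int31 hop) hxI
      rcases eq_or_lt_of_le e2 with z2 | z2
      · have hseg : x ∈ segment ℝ A1 A0 := edge_mem A1 A0 A3 x (by norm_num [ee, A0, A1, A2, A3, A4, A5, A6, A7, A8]) z2.symm e3 e1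
        rw [segment_symm] at hseg
        exact Or.inl (Or.inl (Or.inl (Or.inl (Or.inl (Or.inl (Or.inl (Or.inl (hseg))))))))
      rcases eq_or_lt_of_le e3 with z3 | z3
      · have hseg : x ∈ segment ℝ A0 A3 := edge_mem A0 A3 A1 x (by norm_num [ee, A0, A1, A2, A3, A4, A5, A6, A7, A8]) z3.symm e1 e2
        rw [segment_symm] at hseg
        rw [← insert_endpoints_openSegment] at hseg
        rcases hseg with rfl | rfl | hop
        · exact Or.inl (Or.inl (Or.inl (Or.inl (Or.inl (Or.inl (Or.inr (right_mem_segment ℝ A2 A3)))))))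
        · exact Or.inl (Or.inl (Or.inl (Or.inl (Or.inl (Or.inl (Or.inl (Or.inl (left_mem_segment ℝ A0 A1))))))))
        · exact absurd (int30 hop) hxI
      · exact absurd (strict_mem_int A3 A1 A0 subPE_Q6 D6 z1 z2 z3) hxI
    · obtain ⟨e1, e2, e3⟩ := tri_subset A3 A2 A1 D7 t7
      rcases eq_or_lt_of_le e1 with z1 | z1
      · have hseg : x ∈ segment ℝ A3 A2 := edge_mem A3 A2 A1 x D7 z1.symm e2 e3
        rw [segment_symm] at hseg
        exact Or.inl (Or.inl (Or.inl (Or.inl (Or.inl (Or.inl (Or.inr (hseg)))))))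
      rcases eq_or_lt_of_le e2 with z2 | z2
      · have hseg : x ∈ segment ℝ A2 A1 := edge_mem A2 A1 A3 x (by norm_num [ee, A0, A1, A2, A3, A4, A5, A6, A7, A8]) z2.symm e3 e1
        rw [segment_symm] at hseg
        exact Or.inl (Or.inl (Or.inl (Or.inl (Or.inl (Or.inl (Or.inl (Or.inr (hseg))))))))
      rcases eq_or_lt_of_le e3 with z3 | z3
      · have hseg : x ∈ segment ℝ A1 A3 := edge_mem A1 A3 A2 x (by norm_num [ee, A0, A1, A2, A3, A4, A5, A6, A7, A8]) z3.symm e1 e2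
        rw [segment_symm] at hseg
        rw [← insert_endpoints_openSegment] at hseg
        rcases hseg with rfl | rfl | hop
        · exact Or.inl (Or.inl (Or.inl (Or.inl (Or.inl (Or.inl (Or.inr (right_mem_segment ℝ A2 A3)))))))
        · exact Or.inl (Or.inl (Or.inl (Or.inl (Or.inl (Or.inl (Or.inl (Or.inl (right_mem_segment ℝ A0 A1))))))))
        · exact absurd (int31 hop) hxI
      · exact absurd (strict_mem_int A3 A2 A1 subPE_Q7 D7 z1 z2 z3) hxI
  · intro x hx
    rcases hx with ((((((((h | h) | h) | h) | h) | h) | h) | h) | h)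
    · refine ⟨subPE_Q6 ((convex_convexHull ℝ _).segment_subset (subset_convexHull ℝ _ (by simp)) (subset_convexHull ℝ _ (by simp)) h), ?_⟩
      obtain ⟨u, s', hu, hs', hus, rfl⟩ := h
      exact bd01 u s' hu hs' hus
    · refine ⟨subPE_Q7 ((convex_convexHull ℝ _).segment_subset (subset_convexHull ℝ _ (by simp)) (subset_convexHull ℝ _ (by simp)) h), ?_⟩
      obtain ⟨u, s', hu, hs', hus, rfl⟩ := h
      exact bd12 u s' hu hs' hus
    · refine ⟨subPE_Q7 ((convex_convexHull ℝ _).segment_subset (subset_convexHull ℝ _ (by simp)) (subset_convexHull ℝ _ (by simp)) h), ?_⟩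
      obtain ⟨u, s', hu, hs', hus, rfl⟩ := h
      exact bd23 u s' hu hs' hus
    · refine ⟨subPE_Q1 ((convex_convexHull ℝ _).segment_subset (subset_convexHull ℝ _ (by simp)) (subset_convexHull ℝ _ (by simp)) h), ?_⟩
      obtain ⟨u, s', hu, hs', hus, rfl⟩ := h
      exact bd34 u s' hu hs' hus
    · refine ⟨subPE_Q1 ((convex_convexHull ℝ _).segment_subset (subset_convexHull ℝ _ (by simp)) (subset_convexHull ℝ _ (by simp)) h), ?_⟩
      obtain ⟨u, s', hu, hs', hus, rfl⟩ := h
      exact bd45 u s' hu hs' hus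
    · refine ⟨subPE_Q3 ((convex_convexHull ℝ _).segment_subset (subset_convexHull ℝ _ (by simp)) (subset_convexHull ℝ _ (by simp)) h), ?_⟩
      obtain ⟨u, s', hu, hs', hus, rfl⟩ := h
      exact bd56 u s' hu hs' hus
    · refine ⟨subPE_Q3 ((convex_convexHull ℝ _).segment_subset (subset_convexHull ℝ _ (by simp)) (subset_convexHull ℝ _ (by simp)) h), ?_⟩
      obtain ⟨u, s', hu, hs', hus, rfl⟩ := h
      exact bd67 u s' hu hs' hus
    · refine ⟨subPE_Q4 ((convex_convexHull ℝ _).segment_subset (subset_convexHull ℝ _ (by simp)) (subset_convexHull ℝ _ (by simp)) h), ?_⟩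
      obtain ⟨u, s', hu, hs', hus, rfl⟩ := h
      exact bd78 u s' hu hs' hus
    · refine ⟨subPE_Q5 ((convex_convexHull ℝ _).segment_subset (subset_convexHull ℝ _ (by simp)) (subset_convexHull ℝ _ (by simp)) h), ?_⟩
      obtain ⟨u, s', hu, hs', hus, rfl⟩ := h
      exact bd80 u s' hu hs' hus

theorem frontier_nonagon_eq_union_of_edges :
    frontier P =
      segment ℝ (v 0) (v 1) ∪ segment ℝ (v 1) (v 2) ∪ segment ℝ (v 2) (v 3) ∪
      segment ℝ (v 3) (v 4) ∪ segment ℝ (v 4) (v 5) ∪ segment ℝ (v 5) (v 6) ∪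
      segment ℝ (v 6) (v 7) ∪ segment ℝ (v 7) (v 8) ∪ segment ℝ (v 8) (v 0) := by
  have hv0 : v 0 = A0 := rfl
  have hv1 : v 1 = A1 := rfl
  have hv2 : v 2 = A2 := rfl
  have hv3 : v 3 = A3 := rfl
  have hv4 : v 4 = A4 := rfl
  have hv5 : v 5 = A5 := rfl
  have hv6 : v 6 = A6 := rfl
  have hv7 : v 7 = A7 := rfl
  have hv8 : v 8 = A8 := rfl
  have hP : P = PE := by
    unfold P PE Q1 Q2 Q3 Q4 Q5 Q6 Q7
    rw [hv0, hv1, hv2, hv3, hv4, hv5, hv6, hv7, hv8]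
    rw [Set.pair_comm A4 A5, Set.pair_comm A5 A8, Set.pair_comm A6 A7, Set.pair_comm A7 A8,
        Set.pair_comm A8 A0, Set.pair_comm A0 A1, Set.pair_comm A1 A2]
  rw [hP, hv0, hv1, hv2, hv3, hv4, hv5, hv6, hv7, hv8]
  exact final_frontier
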